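/- The minimum weight of a Hamiltonian cycle on S conforming to T equals min_{a ∈ S, a ≠ r} ( D^r_{C(r)}(a) + dist(a, r) ). -/

import Mathlib

/-- A rooted tree on a vertex type `V`, given by a parent function under which
every vertex reaches the root. -/
structure ParentTree (V : Type) where
  root : V
  parent : V → V
  parent_root : parent root = root
  reaches_root : ∀ v, ∃ k, parent^[k] v = root

namespace ParentTree

variable {V : Type}

/-- The set `C(u)` of children of `u`. -/
def children (T : ParentTree V) (u : V) : Set V := {v | T.parent v = u ∧ v ≠ u}

/-- The set `T(u)` of descendants of `u` (including `u` itself). -/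
def desc (T : ParentTree V) (u : V) : Set V := {b | ∃ k, T.parent^[k] b = u}

/-- For a set `U` of siblings, `T(U) = ⋃_{u ∈ U} T(u)`. -/
def descU (T : ParentTree V) (U : Set V) : Set V := ⋃ u ∈ U, T.desc u

end ParentTree

/-- The set of points occurring in a list. -/
def listSet {V : Type} (l : List V) : Set V := {x | x ∈ l}

/-- The weight of a path (a list of points), i.e. the sum of distances over
consecutive pairs. -/
def pathWeight {V X : Type} [MetricSpace X] (f : V → X) (l : List V) : ℝ :=
  ((l.zip l.tail).map fun p => dist (f p.1) (f p.2)).sum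

/-- The elements of `A` occur consecutively in the list `l`. -/
def ConsecutiveIn {V : Type} (A : Set V) (l : List V) : Prop :=
  ∃ m : List V, m <:+: l ∧ listSet m = A

/-- A path conforms to the rooted tree `T` if for every node `w` with
`T(w)` contained in the vertex set of the path, the elements of `T(w)` occur
consecutively in the path. -/
def PathConforms {V : Type} (T : ParentTree V) (l : List V) : Prop :=
  ∀ w : V, T.desc w ⊆ listSet l → ConsecutiveIn (T.desc w) l

/-- `DD T f u Vs a` : the minimum weight `D^u_{Vs}(a)` of a conforming path of
pairwise distinct points that starts at `u`, has vertex set `{u} ∪ T(Vs)`, and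
ends at `a`. -/
noncomputable def DD {V X : Type} [MetricSpace X] (T : ParentTree V) (f : V → X)
    (u : V) (Vs : Set V) (a : V) : ℝ :=
  sInf {w | ∃ l : List V, l.Nodup ∧ l.head? = some u ∧ l.getLast? = some a ∧
    listSet l = {u} ∪ T.descU Vs ∧ PathConforms T l ∧ pathWeight f l = w}

/-- The weight of a Hamiltonian cycle given as a list: the sum of distances
over cyclically consecutive pairs. -/
def cycleWeight {V X : Type} [MetricSpace X] (f : V → X) (h : List V) : ℝ :=
  ((h.zip (h.rotate 1)).map fun p => dist (f p.1) (f p.2)).sum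

/-- A Hamiltonian cycle on the point set: a cyclic ordering of all points,
represented as a duplicate-free list containing every point. -/
def IsHamCycle {V : Type} (h : List V) : Prop := h.Nodup ∧ ∀ x : V, x ∈ h

/-- The set `A` forms a contiguous cyclic arc of the cycle `h`. -/
def IsCyclicArc {V : Type} (A : Set V) (h : List V) : Prop :=
  ∃ i : ℕ, listSet ((h.rotate i).take A.ncard) = A

/-- A Hamiltonian cycle conforms to the rooted tree `T` if for every node `u`
the set `T(u)` of descendants of `u` forms a contiguous cyclic arc of the cycle. -/
def CycleConforms {V : Type} (T : ParentTree V) (h : List V) : Prop :=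
  ∀ u : V, IsCyclicArc (T.desc u) h

namespace ParentTree

variable {V : Type} (T : ParentTree V)

lemma iterate_root (k : ℕ) : T.parent^[k] T.root = T.root :=
  Function.iterate_fixed T.parent_root k

lemma self_mem_desc (u : V) : u ∈ T.desc u := ⟨0, rfl⟩

lemma desc_subset_of_mem {w u : V} (h : w ∈ T.desc u) : T.desc w ⊆ T.desc u := by
  obtain ⟨k, hk⟩ := h
  rintro x ⟨j, hj⟩
  exact ⟨k + j, by rw [Function.iterate_add_apply, hj, hk]⟩

lemma eq_root_of_root_mem_desc {w : V} (h : T.root ∈ T.desc w) : w = T.root := by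
  obtain ⟨k, hk⟩ := h
  rw [iterate_root] at hk
  exact hk.symm

lemma eq_root_of_iterate_self {u : V} {m : ℕ} (hm : 1 ≤ m) (h : T.parent^[m] u = u) :
    u = T.root := by
  obtain ⟨K, hK⟩ := T.reaches_root u
  have hcyc : ∀ j : ℕ, T.parent^[j * m] u = u := by
    intro j
    induction j with
    | zero => simp
    | succ j ih => rw [Nat.succ_mul, Function.iterate_add_apply, h, ih]
  have h2 : T.parent^[(K + 1) * m] u = u := hcyc (K + 1)
  have h3 : (K + 1) * m = ((K + 1) * m - K) + K := by
    have : K ≤ (K + 1) * m := le_trans (Nat.le_add_right _ _) (Nat.le_mul_of_pos_right _ hm)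
    omega
  rw [h3, Function.iterate_add_apply, hK, iterate_root] at h2
  exact h2.symm

lemma eq_root_of_ancestor_child {u c : V} {m : ℕ} (hc : T.parent c = u)
    (h : c = T.parent^[m] u) : u = T.root := by
  apply T.eq_root_of_iterate_self (m := m + 1) (by omega)
  rw [Function.iterate_succ_apply', ← h, hc]

/-- a child's descendant set does not contain the parent -/
lemma not_mem_desc_child {u c : V} (hc : T.parent c = u) (hne : c ≠ u) :
    u ∉ T.desc c := by
  rintro ⟨k, hk⟩
  have hroot : u = T.root := by
    apply T.eq_root_of_iterate_self (m := k + 1) (by omega)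
    rw [Function.iterate_succ_apply', hk, hc]
  have : c = T.parent^[k] u := hk.symm
  rw [hroot] at this
  rw [iterate_root] at this
  exact hne (this.trans hroot.symm)

/-- every proper descendant is a descendant of some child -/
lemma exists_child_of_mem_desc {w u : V} (h : w ∈ T.desc u) (hne : w ≠ u) :
    ∃ c, T.parent c = u ∧ c ≠ u ∧ w ∈ T.desc c := by
  classical
  obtain ⟨k, hk⟩ := h
  have hk1 : 1 ≤ k := by
    rcases Nat.eq_zero_or_pos k with h0 | h1
    · exact absurd (by simpa [h0] using hk) hne
    · exact h1
  -- find minimal k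
  have hex : ∃ k, T.parent^[k] w = u := ⟨k, hk⟩
  set k0 := Nat.find hex with hk0def
  have hk0 : T.parent^[k0] w = u := Nat.find_spec hex
  have hk01 : 1 ≤ k0 := by
    rcases Nat.eq_zero_or_pos k0 with h0 | h1
    · exact absurd (by simpa [h0] using hk0) hne
    · exact h1
  refine ⟨T.parent^[k0 - 1] w, ?_, ?_, ⟨k0 - 1, rfl⟩⟩
  · rw [show k0 = (k0 - 1) + 1 from by omega, Function.iterate_succ_apply'] at hk0
    exact hk0
  · intro hcu
    have := Nat.find_min hex (m := k0 - 1) (by omega)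
    exact this hcu

/-- siblings have disjoint descendant sets -/
lemma desc_disjoint_siblings {u c c' : V} (hc : T.parent c = u) (hcu : c ≠ u)
    (hc' : T.parent c' = u) (hcu' : c' ≠ u) (hne : c ≠ c') :
    T.desc c ∩ T.desc c' = ∅ := by
  by_contra hcon
  obtain ⟨x, ⟨k, hk⟩, ⟨k', hk'⟩⟩ := Set.nonempty_iff_ne_empty.2 hcon
  rcases le_total k k' with hle | hle
  · have h1 : T.parent^[k' - k] c = c' := by
      rw [← hk, ← Function.iterate_add_apply]
      rw [show k' - k + k = k' from by omega, hk']
    rcases Nat.eq_zero_or_pos (k' - k) with h0 | hpos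
    · exact hne (by simpa [h0] using h1)
    · have : c' = T.parent^[k' - k - 1] u := by
        rw [← hc, ← Function.iterate_succ_apply,
          show (k' - k - 1).succ = k' - k from by omega, h1]
      have hroot := T.eq_root_of_ancestor_child hc' this
      rw [hroot] at this
      rw [iterate_root] at this
      exact hcu' (this.trans hroot.symm)
  · have h1 : T.parent^[k - k'] c' = c := by
      rw [← hk', ← Function.iterate_add_apply]
      rw [show k - k' + k' = k from by omega, hk]
    rcases Nat.eq_zero_or_pos (k - k') with h0 | hpos
    · rw [h0] at h1; simp at h1; exact hne h1.symm
    · have : c = T.parent^[k - k' - 1] u := by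
        rw [← hc', ← Function.iterate_succ_apply,
          show (k - k' - 1).succ = k - k' from by omega, h1]
      have hroot := T.eq_root_of_ancestor_child hc this
      rw [hroot] at this
      rw [iterate_root] at this
      exact hcu (this.trans hroot.symm)

lemma desc_root_eq_univ : T.desc T.root = Set.univ := by
  ext v; simp only [Set.mem_univ, iff_true]
  exact T.reaches_root v

/-- decomposition of desc -/
lemma desc_eq_union (u : V) :
    T.desc u = {u} ∪ T.descU (T.children u) := by
  ext w
  constructor
  · intro hw
    by_cases hwu : w = u
    · exact Or.inl hwu
    · obtain ⟨c, hc1, hc2, hc3⟩ := T.exists_child_of_mem_desc hw hwu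
      exact Or.inr (Set.mem_biUnion ⟨hc1, hc2⟩ hc3)
  · rintro (h | h)
    · rw [Set.mem_singleton_iff] at h; rw [h]; exact T.self_mem_desc u
    · obtain ⟨c, hc, hw⟩ := Set.mem_iUnion₂.1 h
      exact T.desc_subset_of_mem ⟨1, by simpa using hc.1⟩ hw

end ParentTree
section Weights

variable {V X : Type} [MetricSpace X] (f : V → X)

lemma pathWeight_nonneg (l : List V) : 0 ≤ pathWeight f l := by
  apply List.sum_nonneg
  intro x hx
  obtain ⟨p, _, rfl⟩ := List.mem_map.1 hx
  exact dist_nonneg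

lemma cycleWeight_nonneg (l : List V) : 0 ≤ cycleWeight f l := by
  apply List.sum_nonneg
  intro x hx
  obtain ⟨p, _, rfl⟩ := List.mem_map.1 hx
  exact dist_nonneg

lemma pathWeight_nil : pathWeight f ([] : List V) = 0 := rfl

lemma pathWeight_single (x : V) : pathWeight f [x] = 0 := rfl

lemma pathWeight_cons_cons (x y : V) (t : List V) :
    pathWeight f (x :: y :: t) = dist (f x) (f y) + pathWeight f (y :: t) := by
  simp [pathWeight]

lemma pathWeight_append_singleton (t : List V) (y x : V) :
    pathWeight f ((y :: t) ++ [x]) = pathWeight f (y :: t) + dist (f (t.getLastD y)) (f x) := by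
  induction t generalizing y with
  | nil => simp [pathWeight]
  | cons z s ih =>
    rw [show ((y :: z :: s) ++ [x]) = y :: ((z :: s) ++ [x]) from rfl, List.cons_append,
      pathWeight_cons_cons, ← List.cons_append, ih z, pathWeight_cons_cons,
      List.getLastD_cons]
    ring

lemma zip_cycle_sum (t : List V) (y x : V) :
    ((List.zip (y :: t) (t ++ [x])).map fun p => dist (f p.1) (f p.2)).sum =
      pathWeight f (y :: t) + dist (f (t.getLastD y)) (f x) := by
  induction t generalizing y with
  | nil => simp [pathWeight]
  | cons z s ih =>
    have : List.zip (y :: z :: s) ((z :: s) ++ [x]) = (y, z) :: List.zip (z :: s) (s ++ [x]) := by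
      simp
    rw [this]
    simp only [List.map_cons, List.sum_cons, ih z, pathWeight_cons_cons, List.getLastD_cons]
    ring

lemma cycleWeight_cons (x : V) (t : List V) :
    cycleWeight f (x :: t) = pathWeight f (x :: t) + dist (f (t.getLastD x)) (f x) := by
  have hrot : (x :: t).rotate 1 = t ++ [x] := by
    rw [show (1 : ℕ) = 0 + 1 from rfl, List.rotate_cons_succ, List.rotate_zero]
  rw [cycleWeight, hrot, zip_cycle_sum]

lemma cycleWeight_rotate_one (l : List V) :
    cycleWeight f (l.rotate 1) = cycleWeight f l := by
  cases l with
  | nil => simp [cycleWeight]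
  | cons x t =>
    have hrot : (x :: t).rotate 1 = t ++ [x] := by
      rw [show (1 : ℕ) = 0 + 1 from rfl, List.rotate_cons_succ, List.rotate_zero]
    rw [hrot]
    cases t with
    | nil => simp
    | cons y s =>
      rw [show ((y :: s) ++ [x]) = y :: (s ++ [x]) from rfl, cycleWeight_cons,
        cycleWeight_cons, ← List.cons_append, pathWeight_append_singleton,
        pathWeight_cons_cons, List.getLastD_cons]
      have h1 : (s ++ [x]).getLastD y = x := by simp
      rw [h1]
      ring

lemma cycleWeight_rotate (l : List V) (n : ℕ) :
    cycleWeight f (l.rotate n) = cycleWeight f l := by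
  induction n generalizing l with
  | zero => simp
  | succ n ih =>
    have : l.rotate (n + 1) = (l.rotate 1).rotate n := by
      rw [List.rotate_rotate]; ring_nf
    rw [this, ih, cycleWeight_rotate_one]

/-- cycle weight in terms of path weight, head and last -/
lemma cycleWeight_eq_pathWeight (l : List V) (r a : V) (hh : l.head? = some r)
    (hl : l.getLast? = some a) :
    cycleWeight f l = pathWeight f l + dist (f a) (f r) := by
  cases l with
  | nil => simp at hh
  | cons x t =>
    have hx : x = r := by simpa using hh
    subst hx
    have ha : t.getLastD x = a := by
      rw [List.getLastD_eq_getLast?]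
      cases t with
      | nil => simpa using hl
      | cons y s =>
        rw [List.getLast?_cons_cons] at hl
        rw [hl]; rfl
    rw [cycleWeight_cons, ha]
section Arcs

variable {V : Type}

lemma mem_listSet {l : List V} {x : V} : x ∈ listSet l ↔ x ∈ l := Iff.rfl

lemma listSet_rotate (l : List V) (n : ℕ) : listSet (l.rotate n) = listSet l := by
  ext x; simp [listSet, List.mem_rotate]

lemma ncard_listSet {l : List V} (h : l.Nodup) : (listSet l).ncard = l.length := by
  classical
  have h1 : listSet l = ↑l.toFinset := by ext x; simp [listSet]
  rw [h1, Set.ncard_coe_finset, List.toFinset_card_of_nodup h]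

lemma isCyclicArc_of_infix {h m : List V} (hnd : h.Nodup) (hm : m <:+: h) :
    IsCyclicArc (listSet m) h := by
  have hndm : m.Nodup := hm.sublist.nodup hnd
  obtain ⟨s, t, rfl⟩ := hm
  refine ⟨s.length, ?_⟩
  rw [ncard_listSet hndm]
  have e1 : (s ++ m ++ t).rotate s.length = (m ++ t) ++ s := by
    rw [List.append_assoc, List.rotate_eq_drop_append_take (by simp), List.drop_left,
      List.take_left]
  rw [e1, List.append_assoc, List.take_left]

lemma isCyclicArc_rotate {h : List V} {A : Set V} (harc : IsCyclicArc A h) (i : ℕ) :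
    IsCyclicArc A (h.rotate i) := by
  obtain ⟨j, hj⟩ := harc
  rcases Nat.eq_zero_or_pos h.length with h0 | hpos
  · have : h = [] := List.length_eq_zero_iff.1 h0
    subst this
    exact ⟨j, by simpa using hj⟩
  · refine ⟨j + (h.length - i % h.length), ?_⟩
    rw [List.rotate_rotate]
    have harith : i + (j + (h.length - i % h.length)) = j + h.length * (i / h.length + 1) := by
      have h1 := Nat.div_add_mod i h.length
      have h2 := Nat.mod_lt i hpos
      rw [Nat.mul_add, Nat.mul_one]
      omega
    rw [harith, ← List.rotate_mod, Nat.add_mul_mod_self_left, List.rotate_mod]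
    exact hj

lemma exists_infix_of_arc {h : List V} {A : Set V} {r : V} (hnd : h.Nodup)
    (hh : h.head? = some r) (hr : r ∉ A) (harc : IsCyclicArc A h) :
    ∃ m, m <:+: h ∧ listSet m = A := by
  obtain ⟨i, hi⟩ := harc
  have hne : h ≠ [] := by intro he; rw [he] at hh; simp at hh
  have hpos : 0 < h.length := List.length_pos_iff.2 hne
  set n := h.length with hn
  set j := i % n with hjdef
  have hjn : j < n := Nat.mod_lt i hpos
  have hrot : h.rotate j = h.rotate i := by rw [hjdef, List.rotate_mod]
  set k := A.ncard with hk
  set m' := (h.rotate j).take k with hm'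
  have hsetm' : listSet m' = A := by rw [hm', hrot]; exact hi
  have hndm' : m'.Nodup := ((List.take_sublist _ _).nodup (List.nodup_rotate.2 hnd))
  have hlenm' : m'.length = k := by rw [← ncard_listSet hndm', hsetm']
  have hkn : k ≤ n := by
    have : m'.length = min k n := by rw [hm', List.length_take, List.length_rotate]
    rw [hlenm'] at this
    omega
  have hsplit : h.rotate j = h.drop j ++ h.take j :=
    List.rotate_eq_drop_append_take (le_of_lt hjn)
  by_cases hcase : k ≤ n - j
  · -- m' is a take of drop
    have : m' = (h.drop j).take k := by
      rw [hm', hsplit, List.take_append]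
      have : k - (h.drop j).length = 0 := by
        rw [List.length_drop]; omega
      rw [this, List.take_zero, List.append_nil]
    refine ⟨m', ?_, hsetm'⟩
    rw [this]
    exact ((List.take_prefix _ _).isInfix).trans (List.drop_suffix j h).isInfix
  · -- wraps around; contradiction
    exfalso
    have hj1 : 1 ≤ j := by
      by_contra hj0
      have : j = 0 := by omega
      rw [this] at hcase; omega
    have hm'eq : m' = h.drop j ++ (h.take j).take (k - (n - j)) := by
      rw [hm', hsplit, List.take_append, List.length_drop,
        List.take_of_length_le (by rw [List.length_drop]; omega)]
    have hrm : r ∈ m' := by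
      rw [hm'eq]
      apply List.mem_append_right
      rw [List.take_take]
      obtain ⟨x, tl, hxtl⟩ : ∃ x tl, h = x :: tl := by
        cases h with
        | nil => exact absurd rfl hne
        | cons x tl => exact ⟨x, tl, rfl⟩
      have hx : x = r := by rw [hxtl] at hh; simpa using hh
      have hmin : 1 ≤ min (k - (n - j)) j := by omega
      obtain ⟨m, hm⟩ : ∃ m, min (k - (n - j)) j = m + 1 := ⟨min (k - (n - j)) j - 1, by omega⟩
      rw [hm, hxtl, List.take_cons (by omega), hx]
      exact List.mem_cons_self
    exact hr (hsetm' ▸ hrm)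

end Arcs
section DFS

variable {V : Type} [Fintype V]

open Classical in
/-- list of children of `u` -/
noncomputable def childList (T : ParentTree V) (u : V) : List V :=
  (Finset.univ.filter (fun v => T.parent v = u ∧ v ≠ u)).toList

lemma mem_childList {T : ParentTree V} {u c : V} :
    c ∈ childList T u ↔ T.parent c = u ∧ c ≠ u := by
  simp [childList]

lemma childList_nodup (T : ParentTree V) (u : V) : (childList T u).Nodup :=
  Finset.nodup_toList _

open Classical in
/-- DFS order of the subtree at `u`, arranged so that the path ends at `a`
whenever `a` is in the subtree. -/
noncomputable def dfsA (T : ParentTree V) (a : V) : ℕ → V → List V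
  | 0, u => [u]
  | n+1, u =>
    if u = a then (childList T u).flatMap (dfsA T a n) ++ [u]
    else u :: (((childList T u).filter (fun c => a ∉ T.desc c)).flatMap (dfsA T a n) ++
      ((childList T u).filter (fun c => a ∈ T.desc c)).flatMap (dfsA T a n))

/-- fuel sufficiency predicate -/
def Sees (T : ParentTree V) (n : ℕ) (u : V) : Prop :=
  ∀ v ∈ T.desc u, ∃ k ≤ n, T.parent^[k] v = u

lemma sees_child {T : ParentTree V} {n : ℕ} {u c : V} (hS : Sees T (n + 1) u)
    (hc : T.parent c = u) (hcu : c ≠ u) : Sees T n c := by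
  intro v hv
  obtain ⟨j, hj⟩ := hv
  have hvu : v ∈ T.desc u := T.desc_subset_of_mem ⟨1, by simpa using hc⟩ ⟨j, hj⟩
  obtain ⟨k, hk, hku⟩ := hS v hvu
  by_cases hjn : j ≤ n
  · exact ⟨j, hjn, hj⟩
  · exfalso
    have hkj : k ≤ j := by omega
    have h1 : T.parent^[j - k] u = c := by
      rw [← hku, ← Function.iterate_add_apply, show j - k + k = j from by omega, hj]
    rcases Nat.eq_zero_or_pos (j - k) with h0 | hpos
    · rw [h0] at h1; exact hcu h1.symm
    · have hroot := T.eq_root_of_ancestor_child hc h1.symm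
      rw [hroot] at h1
      rw [T.iterate_root] at h1
      exact hcu (h1.symm.trans hroot.symm)

lemma sees_root (T : ParentTree V) : Sees T (Fintype.card V) T.root := by
  intro v _
  have hex := T.reaches_root v
  classical
  set k0 := Nat.find hex with hk0
  have hspec : T.parent^[k0] v = T.root := Nat.find_spec hex
  refine ⟨k0, ?_, hspec⟩
  have key : ∀ i j : Fin (k0 + 1), (i : ℕ) < (j : ℕ) →
      T.parent^[(i : ℕ)] v ≠ T.parent^[(j : ℕ)] v := by
    intro i j hlt hij
    have h1 : T.parent^[(j : ℕ) - (i : ℕ)] (T.parent^[(i : ℕ)] v) = T.parent^[(i : ℕ)] v := by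
      rw [← Function.iterate_add_apply, show (j : ℕ) - (i : ℕ) + (i : ℕ) = (j : ℕ) from by omega]
      exact hij.symm
    have hroot := T.eq_root_of_iterate_self (by omega : 1 ≤ (j : ℕ) - (i : ℕ)) h1
    have hik : (i : ℕ) < k0 := by omega
    exact Nat.find_min hex hik hroot
  have hinj : Function.Injective (fun i : Fin (k0 + 1) => T.parent^[(i : ℕ)] v) := by
    intro i j hij
    rcases lt_trichotomy (i : ℕ) (j : ℕ) with h | h | h
    · exact absurd hij (key i j h)
    · exact Fin.ext h
    · exact absurd hij.symm (key j i h)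
  have := Fintype.card_le_of_injective _ hinj
  simp at this
  omega

lemma sees_zero_desc {T : ParentTree V} {u : V} (h : Sees T 0 u) : T.desc u = {u} := by
  ext v
  constructor
  · intro hv
    obtain ⟨k, hk, hku⟩ := h v hv
    interval_cases k
    exact hku
  · rintro rfl
    exact T.self_mem_desc _

lemma listSet_append (l₁ l₂ : List V) : listSet (l₁ ++ l₂) = listSet l₁ ∪ listSet l₂ := by
  ext x; simp [listSet]

lemma listSet_cons (x : V) (l : List V) : listSet (x :: l) = {x} ∪ listSet l := by
  ext y; simp [listSet]

lemma listSet_flatMap (L : List V) (g : V → List V) :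
    listSet (L.flatMap g) = ⋃ c ∈ L, listSet (g c) := by
  ext x; simp [listSet]

lemma infix_flatMap {L : List V} {g : V → List V} {c : V} (hc : c ∈ L) :
    g c <:+: L.flatMap g := by
  induction L with
  | nil => simp at hc
  | cons d L ih =>
    rw [List.flatMap_cons]
    rcases List.mem_cons.1 hc with rfl | hmem
    · exact (List.prefix_append _ _).isInfix
    · exact (ih hmem).trans (List.suffix_append _ _).isInfix

lemma getLast?_flatMap {L : List V} {g : V → List V} {a : V} (hL : L ≠ [])
    (hg : ∀ c ∈ L, (g c).getLast? = some a) : (L.flatMap g).getLast? = some a := by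
  induction L with
  | nil => simp at hL
  | cons d L ih =>
    rw [List.flatMap_cons]
    rcases List.eq_nil_or_concat L with rfl | _
    · simpa using hg d (by simp)
    · have hL' : L ≠ [] := by rintro rfl; simp_all
      have hfl : L.flatMap g ≠ [] := by
        intro hnil
        have := ih hL' (fun c hc => hg c (List.mem_cons_of_mem _ hc))
        rw [hnil] at this; simp at this
      rw [List.getLast?_append_of_ne_nil _ hfl]
      exact ih hL' (fun c hc => hg c (List.mem_cons_of_mem _ hc))

/-- flatMap over a nodup list of children of `u`, each block having set `desc c`,
is nodup. -/
lemma flat_children_nodup {T : ParentTree V} {u : V} {L : List V} {g : V → List V}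
    (hL : ∀ c ∈ L, T.parent c = u ∧ c ≠ u) (hnd : L.Nodup)
    (hgn : ∀ c ∈ L, (g c).Nodup) (hgs : ∀ c ∈ L, listSet (g c) = T.desc c) :
    (L.flatMap g).Nodup := by
  rw [List.nodup_flatMap]
  refine ⟨hgn, ?_⟩
  have : ∀ c ∈ L, ∀ c' ∈ L, c ≠ c' → (g c).Disjoint (g c') := by
    intro c hc c' hc' hne x hx hx'
    have h1 : x ∈ T.desc c := by rw [← hgs c hc]; exact hx
    have h2 : x ∈ T.desc c' := by rw [← hgs c' hc']; exact hx'
    have := T.desc_disjoint_siblings (hL c hc).1 (hL c hc).2 (hL c' hc').1 (hL c' hc').2 hne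
    have : x ∈ (∅ : Set V) := this ▸ Set.mem_inter h1 h2
    exact this
  exact List.Pairwise.imp_of_mem (fun {c c'} hc hc' hne => this c hc c' hc' hne) hnd

end DFS
section DFSSpec

variable {V : Type} [Fintype V]

lemma dfsA_spec (T : ParentTree V) (a : V) (n : ℕ) :
    ∀ u, Sees T n u →
    dfsA T a n u ≠ [] ∧
    listSet (dfsA T a n u) = T.desc u ∧
    (dfsA T a n u).Nodup ∧
    (u ≠ a → (dfsA T a n u).head? = some u) ∧
    (a ∈ T.desc u → (dfsA T a n u).getLast? = some a) ∧
    (∀ w ∈ T.desc u, ∃ m, m <:+: dfsA T a n u ∧ listSet m = T.desc w) := by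
  classical
  induction n with
  | zero =>
    intro u hS
    have hdesc := sees_zero_desc hS
    have hls : listSet (dfsA T a 0 u) = T.desc u := by
      rw [hdesc]; ext x; simp [dfsA, listSet]
    refine ⟨by simp [dfsA], hls, by simp [dfsA], by intro _; simp [dfsA], ?_, ?_⟩
    · intro ha
      rw [hdesc] at ha
      simp only [Set.mem_singleton_iff] at ha
      simp [dfsA, ha]
    · intro w hw
      rw [hdesc] at hw
      simp only [Set.mem_singleton_iff] at hw
      subst hw
      exact ⟨dfsA T a 0 w, List.infix_rfl, hls⟩
  | succ n ih =>
    intro u hS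
    have hch : ∀ c ∈ childList T u, T.parent c = u ∧ c ≠ u := fun c hc => mem_childList.1 hc
    have hsee : ∀ c ∈ childList T u, Sees T n c :=
      fun c hc => sees_child hS (hch c hc).1 (hch c hc).2
    have hne' : ∀ c ∈ childList T u, dfsA T a n c ≠ [] := fun c hc => (ih c (hsee c hc)).1
    have hset : ∀ c ∈ childList T u, listSet (dfsA T a n c) = T.desc c :=
      fun c hc => (ih c (hsee c hc)).2.1
    have hnd : ∀ c ∈ childList T u, (dfsA T a n c).Nodup :=
      fun c hc => (ih c (hsee c hc)).2.2.1
    have hlast : ∀ c ∈ childList T u, a ∈ T.desc c → (dfsA T a n c).getLast? = some a :=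
      fun c hc => (ih c (hsee c hc)).2.2.2.2.1
    have hinf : ∀ c ∈ childList T u, ∀ w ∈ T.desc c,
        ∃ m, m <:+: dfsA T a n c ∧ listSet m = T.desc w :=
      fun c hc => (ih c (hsee c hc)).2.2.2.2.2
    have hdecomp : T.desc u = {u} ∪ ⋃ c ∈ childList T u, T.desc c := by
      rw [T.desc_eq_union u]
      congr 1
      ext x
      simp only [ParentTree.descU, ParentTree.children, Set.mem_iUnion, Set.mem_setOf_eq]
      constructor
      · rintro ⟨c, ⟨h1, h2⟩, h3⟩
        exact ⟨c, mem_childList.2 ⟨h1, h2⟩, h3⟩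
      · rintro ⟨c, h1, h3⟩
        exact ⟨c, mem_childList.1 h1, h3⟩
    have humem : ∀ c ∈ childList T u, u ∉ dfsA T a n c := by
      intro c hc hu
      have : u ∈ T.desc c := by rw [← hset c hc]; exact hu
      exact T.not_mem_desc_child (hch c hc).1 (hch c hc).2 this
    by_cases hua : u = a
    · -- branch u = a
      subst hua
      have heq : dfsA T u (n + 1) u = (childList T u).flatMap (dfsA T u n) ++ [u] := by
        simp [dfsA]
      have hlsu : listSet (dfsA T u (n + 1) u) = T.desc u := by
        rw [heq, listSet_append, listSet_flatMap, hdecomp]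
        rw [Set.iUnion₂_congr hset]
        have : listSet [u] = ({u} : Set V) := by ext x; simp [listSet]
        rw [this, Set.union_comm]
      refine ⟨by rw [heq]; simp, hlsu, ?_, fun h => absurd rfl h, ?_, ?_⟩
      · rw [heq]
        apply List.Nodup.append
        · exact flat_children_nodup hch (childList_nodup T u) hnd hset
        · simp
        · intro x hx hxu
          simp only [List.mem_singleton] at hxu
          subst hxu
          obtain ⟨c, hc, hxc⟩ := List.mem_flatMap.1 hx
          exact humem c hc hxc
      · intro _
        rw [heq, List.getLast?_concat]
      · intro w hw
        by_cases hwu : w = u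
        · subst hwu
          exact ⟨dfsA T w (n + 1) w, List.infix_rfl, hlsu⟩
        · obtain ⟨c, hc1, hc2, hc3⟩ := T.exists_child_of_mem_desc hw hwu
          have hcl : c ∈ childList T u := mem_childList.2 ⟨hc1, hc2⟩
          obtain ⟨m, hm1, hm2⟩ := hinf c hcl w hc3
          refine ⟨m, ?_, hm2⟩
          rw [heq]
          exact (hm1.trans (infix_flatMap hcl)).trans (List.prefix_append _ _).isInfix
    · -- branch u ≠ a
      have heq : dfsA T a (n + 1) u =
          u :: (((childList T u).filter (fun c => a ∉ T.desc c)).flatMap (dfsA T a n) ++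
            ((childList T u).filter (fun c => a ∈ T.desc c)).flatMap (dfsA T a n)) := by
        simp [dfsA, hua]
      set Lo := (childList T u).filter (fun c => a ∉ T.desc c) with hLo
      set Li := (childList T u).filter (fun c => a ∈ T.desc c) with hLi
      have hLoMem : ∀ c, c ∈ Lo ↔ c ∈ childList T u ∧ a ∉ T.desc c := by
        intro c; rw [hLo, List.mem_filter]; simp
      have hLiMem : ∀ c, c ∈ Li ↔ c ∈ childList T u ∧ a ∈ T.desc c := by
        intro c; rw [hLi, List.mem_filter]; simp
      have hMMem : ∀ c, c ∈ Lo ++ Li ↔ c ∈ childList T u := by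
        intro c
        rw [List.mem_append, hLoMem, hLiMem]
        by_cases hadc : a ∈ T.desc c <;> tauto
      have heq2 : dfsA T a (n + 1) u = u :: (Lo ++ Li).flatMap (dfsA T a n) := by
        rw [heq, List.flatMap_append]
      have hlsu : listSet (dfsA T a (n + 1) u) = T.desc u := by
        rw [heq2, listSet_cons, listSet_flatMap, hdecomp]
        congr 1
        ext x
        simp only [Set.mem_iUnion]
        constructor
        · rintro ⟨c, h1, h2⟩
          exact ⟨c, (hMMem c).1 h1, by rw [← hset c ((hMMem c).1 h1)]; exact h2⟩
        · rintro ⟨c, h1, h2⟩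
          exact ⟨c, (hMMem c).2 h1, by rw [hset c h1]; exact h2⟩
      refine ⟨by rw [heq2]; simp, hlsu, ?_, by intro _; rw [heq2]; rfl, ?_, ?_⟩
      · rw [heq2]
        apply List.Nodup.cons
        · intro hu
          obtain ⟨c, hc, hxc⟩ := List.mem_flatMap.1 hu
          exact humem c ((hMMem c).1 hc) hxc
        · apply flat_children_nodup (fun c hc => hch c ((hMMem c).1 hc))
          · apply List.Nodup.append
            · exact (childList_nodup T u).filter _
            · exact (childList_nodup T u).filter _
            · intro c hc1 hc2
              exact ((hLoMem c).1 hc1).2 ((hLiMem c).1 hc2).2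
          · exact fun c hc => hnd c ((hMMem c).1 hc)
          · exact fun c hc => hset c ((hMMem c).1 hc)
      · -- getLast
        intro hadu
        have hau : a ≠ u := fun h => hua h.symm
        obtain ⟨c0, hc01, hc02, hc03⟩ := T.exists_child_of_mem_desc hadu hau
        have hc0L : c0 ∈ Li := (hLiMem c0).2 ⟨mem_childList.2 ⟨hc01, hc02⟩, hc03⟩
        have hLine : Li ≠ [] := List.ne_nil_of_mem hc0L
        have hflast : (Li.flatMap (dfsA T a n)).getLast? = some a := by
          apply getLast?_flatMap hLine
          intro c hc
          exact hlast c ((hLiMem c).1 hc).1 ((hLiMem c).1 hc).2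
        have hflne : Li.flatMap (dfsA T a n) ≠ [] := by
          intro hnil; rw [hnil] at hflast; simp at hflast
        rw [heq, show u :: (Lo.flatMap (dfsA T a n) ++ Li.flatMap (dfsA T a n)) =
          (u :: Lo.flatMap (dfsA T a n)) ++ Li.flatMap (dfsA T a n) from rfl,
          List.getLast?_append_of_ne_nil _ hflne]
        exact hflast
      · -- infix
        intro w hw
        by_cases hwu : w = u
        · subst hwu
          exact ⟨dfsA T a (n + 1) w, List.infix_rfl, hlsu⟩
        · obtain ⟨c, hc1, hc2, hc3⟩ := T.exists_child_of_mem_desc hw hwu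
          have hcl : c ∈ childList T u := mem_childList.2 ⟨hc1, hc2⟩
          obtain ⟨m, hm1, hm2⟩ := hinf c hcl w hc3
          refine ⟨m, ?_, hm2⟩
          rw [heq2]
          exact (hm1.trans (infix_flatMap ((hMMem c).2 hcl))).trans
            (List.suffix_cons u _).isInfix

end DFSSpec
section Assembly

variable {V X : Type} [Fintype V] [MetricSpace X]

lemma mem_of_getLast?_eq {l : List V} {a : V} (h : l.getLast? = some a) : a ∈ l := by
  obtain ⟨hne, rfl⟩ := List.mem_getLast?_eq_getLast h
  exact List.getLast_mem hne

lemma head_ne_last {l : List V} {r a : V} (hnd : l.Nodup) (h2 : 2 ≤ l.length)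
    (hh : l.head? = some r) (hl : l.getLast? = some a) : a ≠ r := by
  cases l with
  | nil => simp at hh
  | cons x t =>
    have hx : x = r := by simpa using hh
    subst hx
    cases t with
    | nil => simp at h2
    | cons y s =>
      rw [List.getLast?_cons_cons] at hl
      have hat : a ∈ y :: s := mem_of_getLast?_eq hl
      have : x ∉ y :: s := (List.nodup_cons.1 hnd).1
      intro hax
      rw [hax] at hat
      exact this hat

lemma exists_conforming_path (T : ParentTree V) (a : V) (ha : a ≠ T.root) :
    ∃ l : List V, l.Nodup ∧ l.head? = some T.root ∧ l.getLast? = some a ∧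
      listSet l = {T.root} ∪ T.descU (T.children T.root) ∧ PathConforms T l := by
  obtain ⟨hne, hset, hnd, hhead, hlast, hinf⟩ :=
    dfsA_spec T a (Fintype.card V) T.root (sees_root T)
  refine ⟨dfsA T a (Fintype.card V) T.root, hnd, hhead (fun h => ha h.symm), ?_, ?_, ?_⟩
  · exact hlast (by rw [T.desc_root_eq_univ]; trivial)
  · rw [hset, ← T.desc_eq_union]
  · intro w _
    obtain ⟨m, hm1, hm2⟩ := hinf w (by rw [T.desc_root_eq_univ]; trivial)
    exact ⟨m, hm1, hm2⟩

lemma path_of_cycle (T : ParentTree V) (f : V → X) (hn : 3 ≤ Fintype.card V) {h : List V}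
    (hham : IsHamCycle h) (hconf : CycleConforms T h) :
    ∃ (a : V) (l : List V), a ≠ T.root ∧ l.Nodup ∧ l.head? = some T.root ∧
      l.getLast? = some a ∧ listSet l = {T.root} ∪ T.descU (T.children T.root) ∧
      PathConforms T l ∧ pathWeight f l + dist (f a) (f T.root) = cycleWeight f h := by
  classical
  obtain ⟨hnd, hall⟩ := hham
  have hlen : h.length = Fintype.card V := by
    have h1 : h.toFinset = Finset.univ := Finset.eq_univ_iff_forall.2 (by simp [hall])
    rw [← List.toFinset_card_of_nodup hnd, h1, Finset.card_univ]
  obtain ⟨i, hi⟩ := List.mem_iff_get.1 (hall T.root)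
  set l := h.rotate i with hl
  have hndl : l.Nodup := List.nodup_rotate.2 hnd
  have hlenl : l.length = h.length := List.length_rotate h i
  have hhead : l.head? = some T.root := by
    rw [hl, List.rotate_eq_drop_append_take (le_of_lt i.isLt)]
    rw [List.head?_append_of_ne_nil]
    · rw [List.head?_drop]
      rw [List.getElem?_eq_getElem i.isLt]
      simp [← hi, List.get_eq_getElem]
    · intro hnil
      have := congrArg List.length hnil
      simp at this
      omega
  have hlne : l ≠ [] := by
    intro hnil
    rw [hnil] at hlenl
    simp at hlenl
    omega
  set a := l.getLast hlne with hadef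
  have hlast : l.getLast? = some a := List.getLast?_eq_getLast_of_ne_nil hlne
  have har : a ≠ T.root := head_ne_last hndl (by omega) hhead hlast
  have hlsl : listSet l = T.desc T.root := by
    rw [T.desc_root_eq_univ]
    ext x
    simp [hl, listSet, List.mem_rotate, hall]
  refine ⟨a, l, har, hndl, hhead, hlast, ?_, ?_, ?_⟩
  · rw [hlsl, ← T.desc_eq_union]
  · intro w _
    by_cases hwr : w = T.root
    · subst hwr
      exact ⟨l, List.infix_rfl, hlsl⟩
    · have hr : T.root ∉ T.desc w := fun hmem => hwr (T.eq_root_of_root_mem_desc hmem)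
      have harc : IsCyclicArc (T.desc w) l := isCyclicArc_rotate (hconf w) i
      obtain ⟨m, hm1, hm2⟩ := exists_infix_of_arc hndl hhead hr harc
      exact ⟨m, hm1, hm2⟩
  · rw [← cycleWeight_eq_pathWeight f l T.root a hhead hlast, hl, cycleWeight_rotate]

lemma cycle_of_path (T : ParentTree V) (f : V → X) {l : List V} {a : V}
    (hnd : l.Nodup) (hh : l.head? = some T.root) (hla : l.getLast? = some a)
    (hls : listSet l = {T.root} ∪ T.descU (T.children T.root)) (hpc : PathConforms T l) :
    IsHamCycle l ∧ CycleConforms T l ∧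
      cycleWeight f l = pathWeight f l + dist (f a) (f T.root) := by
  have hlsu : listSet l = Set.univ := by
    rw [hls, ← T.desc_eq_union, T.desc_root_eq_univ]
  refine ⟨⟨hnd, fun x => ?_⟩, ?_, ?_⟩
  · have : x ∈ listSet l := by rw [hlsu]; trivial
    exact this
  · intro w
    obtain ⟨m, hm1, hm2⟩ := hpc w (by rw [hlsu]; exact Set.subset_univ _)
    have := isCyclicArc_of_infix hnd hm1
    rwa [hm2] at this
  · exact cycleWeight_eq_pathWeight f l T.root a hh hla

end Assembly
/-- The minimum weight of a Hamiltonian cycle conforming to `T` equals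
`min_{a ≠ r} ( D^r_{C(r)}(a) + dist(a, r) )`. -/
theorem stmt2 {V X : Type} [Fintype V] [MetricSpace X]
    (hn : 3 ≤ Fintype.card V) (f : V → X) (hf : Function.Injective f)
    (T : ParentTree V) :
    sInf {w | ∃ h : List V, IsHamCycle h ∧ CycleConforms T h ∧ cycleWeight f h = w} =
    sInf {r | ∃ a : V, a ≠ T.root ∧
      r = DD T f T.root (T.children T.root) a + dist (f a) (f T.root)} := by
  classical
  set Sc := {w | ∃ h : List V, IsHamCycle h ∧ CycleConforms T h ∧ cycleWeight f h = w}
    with hScdef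
  set SR := {r | ∃ a : V, a ≠ T.root ∧
      r = DD T f T.root (T.children T.root) a + dist (f a) (f T.root)} with hSRdef
  set P : V → Set ℝ := fun a => {w | ∃ l : List V, l.Nodup ∧ l.head? = some T.root ∧
    l.getLast? = some a ∧ listSet l = {T.root} ∪ T.descU (T.children T.root) ∧
    PathConforms T l ∧ pathWeight f l = w} with hPdef
  have hDD : ∀ a : V, DD T f T.root (T.children T.root) a = sInf (P a) := fun a => rfl
  have hPlb : ∀ a : V, ∀ w ∈ P a, (0:ℝ) ≤ w := by
    rintro a w ⟨l, -, -, -, -, -, rfl⟩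
    exact pathWeight_nonneg f l
  have hPbdd : ∀ a : V, BddBelow (P a) := fun a => ⟨0, fun w hw => hPlb a w hw⟩
  have hDDlb : ∀ a : V, 0 ≤ DD T f T.root (T.children T.root) a := by
    intro a; rw [hDD]; exact Real.sInf_nonneg (hPlb a)
  have hSclb : ∀ w ∈ Sc, (0:ℝ) ≤ w := by
    rintro w ⟨h, -, -, rfl⟩
    exact cycleWeight_nonneg f h
  have hScbdd : BddBelow Sc := ⟨0, fun w hw => hSclb w hw⟩
  have hSRbdd : BddBelow SR := by
    refine ⟨0, ?_⟩
    rintro w ⟨a, ha, rfl⟩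
    exact add_nonneg (hDDlb a) dist_nonneg
  obtain ⟨a0, ha0⟩ := Fintype.exists_ne_of_one_lt_card (by omega) T.root
  obtain ⟨l0, hl01, hl02, hl03, hl04, hl05⟩ := exists_conforming_path T a0 ha0
  have hScne : Sc.Nonempty := by
    obtain ⟨hham, hconf, -⟩ := cycle_of_path T f hl01 hl02 hl03 hl04 hl05
    exact ⟨cycleWeight f l0, l0, hham, hconf, rfl⟩
  have hSRne : SR.Nonempty :=
    ⟨DD T f T.root (T.children T.root) a0 + dist (f a0) (f T.root), a0, ha0, rfl⟩
  apply le_antisymm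
  · -- sInf Sc ≤ sInf SR
    apply le_csInf hSRne
    rintro w ⟨a, ha, rfl⟩
    obtain ⟨l, h1, h2, h3, h4, h5⟩ := exists_conforming_path T a ha
    have hPne : (P a).Nonempty := ⟨pathWeight f l, l, h1, h2, h3, h4, h5, rfl⟩
    have key : ∀ p ∈ P a, sInf Sc ≤ p + dist (f a) (f T.root) := by
      rintro p ⟨m, k1, k2, k3, k4, k5, rfl⟩
      obtain ⟨hham, hconf, hw⟩ := cycle_of_path T f k1 k2 k3 k4 k5
      have hmem : cycleWeight f m ∈ Sc := ⟨m, hham, hconf, rfl⟩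
      have h6 := csInf_le hScbdd hmem
      rw [hw] at h6
      exact h6
    have hlow : sInf Sc - dist (f a) (f T.root) ≤ sInf (P a) := by
      apply le_csInf hPne
      intro p hp
      have := key p hp
      linarith
    rw [hDD]
    linarith
  · apply le_csInf hScne
    rintro w ⟨h, hham, hconf, rfl⟩
    obtain ⟨a, l, ha, h1, h2, h3, h4, h5, hweq⟩ := path_of_cycle T f hn hham hconf
    have hmem : pathWeight f l ∈ P a := ⟨l, h1, h2, h3, h4, h5, rfl⟩
    have h6 : sInf (P a) ≤ pathWeight f l := csInf_le (hPbdd a) hmem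
    have h7 : sInf SR ≤ DD T f T.root (T.children T.root) a + dist (f a) (f T.root) :=
      csInf_le hSRbdd ⟨a, ha, rfl⟩
    rw [hDD] at h7
    linarith
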